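/- Let T ⊆ ω^{<ω} be an infinite h-bounded tree for some h ∈ ω^ω. If A ⊆ ω is nonempty and E_A ≤_s [T], then A is recursively enumerable in T ⊕ h. -/

import Mathlib

/-!  Common definitions: mass problems in Baire space, Medvedev reducibility,
enumeration reducibility, trees, and related notions. -/

/-- A Turing functional, given by a monotone partial recursive map taking a
finite initial segment of the oracle and an input to an output value. -/
structure TuringFunctional where
  app : List ℕ × ℕ →. ℕ
  partrec : Partrec app
  mono : ∀ {σ τ : List ℕ} {n y : ℕ}, σ <+: τ → y ∈ app (σ, n) → y ∈ app (τ, n)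

/-- `Φ.Total g f` means that `Φ(g)` is total and equals `f`. -/
def TuringFunctional.Total (Φ : TuringFunctional) (g f : ℕ → ℕ) : Prop :=
  ∀ n, ∃ k, f n ∈ Φ.app ((List.range k).map g, n)

/-- Medvedev reducibility `A ≤ₛ B` between mass problems. -/
def MedvedevLE (A B : Set (ℕ → ℕ)) : Prop :=
  ∃ Φ : TuringFunctional, ∀ g ∈ B, ∃ f, Φ.Total g f ∧ f ∈ A

/-- Medvedev equivalence. -/
def MedvedevEquiv (A B : Set (ℕ → ℕ)) : Prop := MedvedevLE A B ∧ MedvedevLE B A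

/-- The problem of enumerability of `A`: all functions with range `A`. -/
def EProb (A : Set ℕ) : Set (ℕ → ℕ) := {f | Set.range f = A}

/-- The graph of `f`, coded as a set of naturals via the pairing function. -/
def graphSet (f : ℕ → ℕ) : Set ℕ := Set.range fun n => Nat.pair n (f n)

/-- The `e`-th enumeration operator applied to a set `B`:
`x` is enumerated iff for some (code `u` of a) finite list contained in `B`,
the `e`-th partial recursive function halts on `⟨x, u⟩`. -/
def enumOpApply (e : ℕ) (B : Set ℕ) : Set ℕ :=
  {x | ∃ u : ℕ, ((Denumerable.ofNat Nat.Partrec.Code e).eval (Nat.pair x u)).Dom ∧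
        ∀ y ∈ Denumerable.ofNat (List ℕ) u, y ∈ B}

/-- Enumeration reducibility between subsets of `ℕ`. -/
def EnumLE (A B : Set ℕ) : Prop := ∃ e : ℕ, enumOpApply e B = A

/-- Enumeration equivalence. -/
def EnumEquiv (A B : Set ℕ) : Prop := EnumLE A B ∧ EnumLE B A

/-- `A` is recursively enumerable: it is the domain of a partial recursive function. -/
def REset (A : Set ℕ) : Prop := ∃ c : Nat.Partrec.Code, A = {x | (c.eval x).Dom}

/-- `A` is quasiminimal: not r.e., and every total function whose graph
enumeration-reduces to `A` is recursive. -/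
def Quasiminimal (A : Set ℕ) : Prop :=
  ¬ REset A ∧ ∀ f : ℕ → ℕ, EnumLE (graphSet f) A → Computable f

/-- `A` (as a set) has cototal enumeration degree. -/
def CototalDeg (A : Set ℕ) : Prop := ∃ B : Set ℕ, EnumEquiv B A ∧ EnumLE B Bᶜ

/-- The set `K_A = {⟨e,x⟩ : x ∈ Ψ_e(A)}`. -/
def Kset (A : Set ℕ) : Set ℕ := {p | p.unpair.2 ∈ enumOpApply p.unpair.1 A}

/-- The skip of `A`. -/
def skipSet (A : Set ℕ) : Set ℕ := (Kset A)ᶜ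

/-- The recursive join of two subsets of `ℕ`. -/
def joinSet (A B : Set ℕ) : Set ℕ :=
  {n | (n % 2 = 0 ∧ n / 2 ∈ A) ∨ (n % 2 = 1 ∧ n / 2 ∈ B)}

/-- `A` is recursively enumerable in (the characteristic function of) `X`,
i.e. `A ≤ₑ X ⊕ Xᶜ`. -/
def REin (A X : Set ℕ) : Prop := EnumLE A (joinSet X Xᶜ)

/-- Trees: subsets of `ω^{<ω}` closed under initial segments. -/
def IsTree (T : Set (List ℕ)) : Prop := ∀ ⦃σ τ : List ℕ⦄, σ <+: τ → τ ∈ T → σ ∈ T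

/-- A leaf of `T`: a node with no proper extension in `T`. -/
def IsLeaf (T : Set (List ℕ)) (σ : List ℕ) : Prop :=
  σ ∈ T ∧ ∀ τ ∈ T, σ <+: τ → τ = σ

/-- `T` has no leaves. -/
def NoLeaves (T : Set (List ℕ)) : Prop := ∀ σ ∈ T, ¬ IsLeaf T σ

/-- `T` is finitely branching. -/
def FinBranching (T : Set (List ℕ)) : Prop := ∀ σ ∈ T, {n : ℕ | σ ++ [n] ∈ T}.Finite

/-- `[T]`: the set of infinite paths through `T`. -/
def Paths (T : Set (List ℕ)) : Set (ℕ → ℕ) := {f | ∀ n, (List.range n).map f ∈ T}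

/-- A tree coded as a subset of `ℕ`. -/
def codeTree (T : Set (List ℕ)) : Set ℕ := Encodable.encode '' T

/-- `T` is `h`-bounded. -/
def BoundedTree (h : ℕ → ℕ) (T : Set (List ℕ)) : Prop :=
  ∀ σ ∈ T, ∀ i : ℕ, ∀ hi : i < σ.length, σ.get ⟨i, hi⟩ < h i

/-- A uniformly e-pointed tree with respect to functions. -/
def UEPfun (T : Set (List ℕ)) : Prop :=
  IsTree T ∧ FinBranching T ∧ NoLeaves T ∧
    ∃ e : ℕ, ∀ g ∈ Paths T, enumOpApply e (graphSet g) = codeTree T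

/-- A uniformly e-pointed tree with respect to sets (a subtree of `2^{<ω}`). -/
def UEPset (T : Set (List ℕ)) : Prop :=
  IsTree T ∧ (∀ σ ∈ T, ∀ i ∈ σ, i ≤ 1) ∧ NoLeaves T ∧
    ∃ e : ℕ, ∀ g ∈ Paths T, enumOpApply e {n | g n = 1} = codeTree T

/-- Prepend `i` to a function. -/
def consFun (i : ℕ) (f : ℕ → ℕ) : ℕ → ℕ := fun n => Nat.casesOn n i fun m => f m

/-- The mass problem `0⌢A ∪ 1⌢B`, representing the meet of the degrees of `A` and `B`. -/
def meetProb (A B : Set (ℕ → ℕ)) : Set (ℕ → ℕ) := consFun 0 '' A ∪ consFun 1 '' B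

/-- A mass problem has meet-irreducible Medvedev degree: its degree is not the
meet of two strictly larger degrees. -/
def MeetIrred (X : Set (ℕ → ℕ)) : Prop :=
  ¬ ∃ B C : Set (ℕ → ℕ), MedvedevEquiv (meetProb B C) X ∧
      (MedvedevLE X B ∧ ¬ MedvedevLE B X) ∧ (MedvedevLE X C ∧ ¬ MedvedevLE C X)

/-- `σ` is an initial segment of `f`. -/
def strPrefix (σ : List ℕ) (f : ℕ → ℕ) : Prop := (List.range σ.length).map f = σ

/-- A uniform mass problem. -/
def UniformProb (A : Set (ℕ → ℕ)) : Prop :=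
  ∀ σ : List ℕ, (∃ f ∈ A, strPrefix σ f) → MedvedevLE {f | f ∈ A ∧ strPrefix σ f} A

/-- The `{0,1}`-valued diagonally nonrecursive functions. -/
def DNR2 : Set (ℕ → ℕ) :=
  {f | (∀ n, f n ≤ 1) ∧
    ∀ e y : ℕ, y ∈ (Denumerable.ofNat Nat.Partrec.Code e).eval e → f e ≠ y}

/-- `C_A`: injective enumerations of subsets of `A`. -/
def CProb (A : Set ℕ) : Set (ℕ → ℕ) :=
  {f | Function.Injective f ∧ Set.range f ⊆ A}

namespace S4


def hclaim (i v : ℕ) : ℕ := 2 * (2 * Nat.pair i v + 1)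
def nclaim (σ : List ℕ) : ℕ := 2 * (2 * Encodable.encode σ) + 1

/-- least `i < n` with `p i = true`, else `n`. -/
def lfind (p : ℕ → Bool) (n : ℕ) : ℕ :=
  n.rec 0 (fun m ih => if ih < m then ih else if p m then m else m + 1)

lemma lfind_succ (p : ℕ → Bool) (m : ℕ) :
    lfind p (m + 1) = if lfind p m < m then lfind p m else if p m then m else m + 1 := rfl

lemma lfind_le (p : ℕ → Bool) (n : ℕ) : lfind p n ≤ n := by
  induction n with
  | zero => simp [lfind]
  | succ m ih =>
    rw [lfind_succ]
    split
    · omega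
    · split <;> omega

lemma lfind_min (p : ℕ → Bool) (n : ℕ) : ∀ i < lfind p n, p i = false := by
  induction n with
  | zero => simp [lfind]
  | succ m ih =>
    rw [lfind_succ]
    split
    · exact fun i hi => ih i (by omega)
    · next hnl =>
      have hm : lfind p m = m := by have := lfind_le p m; omega
      split
      · exact fun i hi => ih i (by omega)
      · next hp =>
        intro i hi
        rcases Nat.lt_or_ge i m with h | h
        · exact ih i (by omega)
        · have : i = m := by omega
          subst this
          simpa using hp

lemma lfind_spec {p : ℕ → Bool} {n : ℕ} (hl : lfind p n < n) : p (lfind p n) = true := by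
  induction n with
  | zero => omega
  | succ m ih =>
    rw [lfind_succ] at hl ⊢
    rcases Nat.lt_or_ge (lfind p m) m with h1 | h1
    · rw [if_pos h1] at hl ⊢
      exact ih h1
    · rw [if_neg (Nat.not_lt.2 h1)] at hl ⊢
      cases hpm : p m with
      | true => simpa using hpm
      | false => rw [if_neg (by simp [hpm])] at hl; omega

lemma lfind_eq {p : ℕ → Bool} {n k : ℕ} (hk : k < n) (hmin : ∀ i < k, p i = false)
    (hp : p k = true) : lfind p n = k := by
  induction n with
  | zero => omega
  | succ m ih =>
    rw [lfind_succ]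
    rcases Nat.lt_or_ge k m with hkm | hkm
    · rw [ih hkm]
      simp [hkm]
    · have hkm' : k = m := by omega
      subst hkm'
      have h1 : lfind p k = k := by
        have h2 := lfind_le p k
        rcases Nat.lt_or_ge (lfind p k) k with hl | _
        · exact absurd (lfind_spec hl) (by simp [hmin _ hl])
        · omega
      rw [h1]
      simp [hp]

lemma lfind_all {p : ℕ → Bool} {n : ℕ} (hmin : ∀ i < n, p i = false) : lfind p n = n := by
  induction n with
  | zero => rfl
  | succ m ih =>
    rw [lfind_succ, ih fun i hi => hmin i (by omega)]
    simp [hmin m (by omega)]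

def memB (L : List ℕ) (y : ℕ) : Bool := L.foldr (fun w b => (decide (w = y)) || b) false

lemma memB_iff {L : List ℕ} {y : ℕ} : memB L y = true ↔ y ∈ L := by
  induction L with
  | nil => simp [memB]
  | cons a l ih =>
    simp only [memB, List.foldr_cons, Bool.or_eq_true, decide_eq_true_eq]
    rw [show (l.foldr (fun w b => (decide (w = y)) || b) false) = memB l y from rfl, ih,
      List.mem_cons, eq_comm]

def maxL (L : List ℕ) : ℕ := L.foldr max 0

lemma le_maxL {L : List ℕ} {y : ℕ} (hy : y ∈ L) : y ≤ maxL L := by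
  induction L with
  | nil => simp at hy
  | cons a l ih =>
    rcases List.mem_cons.1 hy with rfl | hy
    · exact le_max_left _ _
    · exact le_trans (ih hy) (le_max_right _ _)

/-- all `σ` of given bounds. -/
def strs (l : List ℕ) : List (List ℕ) :=
  l.foldr (fun v acc => (List.range v).flatMap fun a => acc.map (a :: ·)) [[]]

lemma mem_strs {l : List ℕ} {σ : List ℕ} :
    σ ∈ strs l ↔ σ.length = l.length ∧ ∀ i < l.length, σ.getD i 0 < l.getD i 0 := by
  induction l generalizing σ with
  | nil => simp [strs]
  | cons v vs ih =>
    show σ ∈ (List.range v).flatMap (fun a => (strs vs).map (a :: ·)) ↔ _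
    rw [List.mem_flatMap]
    constructor
    · rintro ⟨a, ha, hσ⟩
      rw [List.mem_map] at hσ
      obtain ⟨σ', hσ', rfl⟩ := hσ
      rw [List.mem_range] at ha
      obtain ⟨hlen, hbd⟩ := ih.1 hσ'
      refine ⟨by simp [hlen], ?_⟩
      intro i hi
      cases i with
      | zero => simpa using ha
      | succ j => simpa using hbd j (by simpa using hi)
    · rintro ⟨hlen, hbd⟩
      cases σ with
      | nil => simp at hlen
      | cons a σ' =>
        refine ⟨a, List.mem_range.2 (by simpa using hbd 0 (by simp)), List.mem_map.2
          ⟨σ', ih.2 ⟨by simpa using hlen, fun i hi => by simpa using hbd (i+1) (by simpa using hi)⟩, rfl⟩⟩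

def prefs (σ : List ℕ) : List (List ℕ) :=
  σ.foldr (fun a acc => [] :: acc.map (a :: ·)) [[]]

lemma mem_prefs {σ τ : List ℕ} : τ ∈ prefs σ ↔ τ <+: σ := by
  induction σ generalizing τ with
  | nil => simp [prefs, List.prefix_nil]
  | cons a σ' ih =>
    show τ ∈ [] :: (prefs σ').map (a :: ·) ↔ _
    rw [List.mem_cons, List.mem_map]
    constructor
    · rintro (rfl | ⟨τ', hτ', rfl⟩)
      · exact List.nil_prefix
      · exact List.cons_prefix_cons.2 ⟨rfl, ih.1 hτ'⟩
    · intro hp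
      cases τ with
      | nil => exact Or.inl rfl
      | cons b τ' =>
        obtain ⟨rfl, hp'⟩ := List.cons_prefix_cons.1 hp
        exact Or.inr ⟨τ', ih.2 hp', rfl⟩

lemma foldr_or_iff {α : Type*} (p : α → Bool) (l : List α) :
    (l.foldr (fun a b => p a || b) false) = true ↔ ∃ a ∈ l, p a = true := by
  induction l with
  | nil => simp
  | cons a l ih => simp [ih]

lemma foldr_and_iff {α : Type*} (p : α → Bool) (l : List α) :
    (l.foldr (fun a b => p a && b) true) = true ↔ ∀ a ∈ l, p a = true := by
  induction l with
  | nil => simp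
  | cons a l ih => simp [ih]


variable {T : Set (List ℕ)} {h : ℕ → ℕ}

lemma hclaim_mem {i v : ℕ} :
    hclaim i v ∈ joinSet (joinSet (codeTree T) (graphSet h)) (joinSet (codeTree T) (graphSet h))ᶜ
      ↔ h i = v := by
  have h1 : hclaim i v % 2 = 0 := by simp [hclaim, Nat.mul_mod_right]
  have h2 : hclaim i v / 2 = 2 * Nat.pair i v + 1 := by
    simp [hclaim, Nat.mul_div_cancel_left]
  constructor
  · rintro (⟨-, hm⟩ | ⟨ho, -⟩)
    · rw [h2] at hm
      rcases hm with (⟨he, -⟩ | ⟨-, hg⟩)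
      · omega
      · have : (2 * Nat.pair i v + 1) / 2 = Nat.pair i v := by omega
        rw [this] at hg
        obtain ⟨n, hn⟩ := hg
        rw [Nat.pair_eq_pair] at hn
        obtain ⟨rfl, hv⟩ := hn
        exact hv
    · omega
  · intro hv
    left
    refine ⟨h1, ?_⟩
    rw [h2]
    right
    refine ⟨by omega, ?_⟩
    have : (2 * Nat.pair i v + 1) / 2 = Nat.pair i v := by omega
    rw [this]
    exact ⟨i, show Nat.pair i (h i) = Nat.pair i v by rw [hv]⟩

lemma nclaim_mem {σ : List ℕ} (hT : IsTree T) :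
    nclaim σ ∈ joinSet (joinSet (codeTree T) (graphSet h)) (joinSet (codeTree T) (graphSet h))ᶜ
      ↔ σ ∉ T := by
  have h1 : nclaim σ % 2 = 1 := by simp [nclaim, Nat.mul_add_mod]
  have h2 : nclaim σ / 2 = 2 * Encodable.encode σ := by unfold nclaim; omega
  have hX : (2 * Encodable.encode σ ∈ joinSet (codeTree T) (graphSet h)) ↔ σ ∈ T := by
    constructor
    · rintro (⟨-, hm⟩ | ⟨ho, -⟩)
      · have : 2 * Encodable.encode σ / 2 = Encodable.encode σ := by omega
        rw [this] at hm
        obtain ⟨τ, hτ, he⟩ := hm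
        rwa [← Encodable.encode_injective he]
      · omega
    · intro hσ
      left
      exact ⟨by omega, by
        have : 2 * Encodable.encode σ / 2 = Encodable.encode σ := by omega
        rw [this]; exact ⟨σ, hσ, rfl⟩⟩
  constructor
  · rintro (⟨he, -⟩ | ⟨-, hc⟩)
    · omega
    · rw [h2] at hc
      exact fun hσ => hc (hX.2 hσ)
  · intro hσ
    right
    refine ⟨h1, ?_⟩
    rw [h2]
    exact fun hc => hσ (hX.1 hc)


def ext (T : Set (List ℕ)) (σ : List ℕ) : Set (List ℕ) := {τ ∈ T | σ <+: τ}

lemma ext_mem {σ : List ℕ} (hT : IsTree T) (hne : (ext T σ).Nonempty) : σ ∈ T := by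
  obtain ⟨τ, hτ, hp⟩ := hne
  exact hT hp hτ

lemma ext_step (hbd : BoundedTree h T) {σ : List ℕ} (hinf : (ext T σ).Infinite) :
    ∃ a, (ext T (σ ++ [a])).Infinite := by
  by_contra hc
  push_neg at hc
  have hsub : ext T σ ⊆ {σ} ∪ ⋃ a ∈ Set.Iio (h σ.length), ext T (σ ++ [a]) := by
    rintro τ ⟨hτT, hpre⟩
    rcases eq_or_ne τ σ with rfl | hne
    · exact Or.inl rfl
    · right
      obtain ⟨ρ, rfl⟩ := hpre
      have hρ : ρ ≠ [] := by rintro rfl; simp at hne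
      obtain ⟨a, ρ', rfl⟩ := List.exists_cons_of_ne_nil hρ
      have hlen : σ.length < (σ ++ a :: ρ').length := by simp
      have hget : (σ ++ a :: ρ').get ⟨σ.length, hlen⟩ = a := by
        show (σ ++ a :: ρ')[σ.length]'(hlen) = a
        rw [List.getElem_append_right (le_refl σ.length)]
        simp
      have ha : a < h σ.length := hget ▸ hbd _ hτT σ.length hlen
      refine Set.mem_biUnion ha ⟨hτT, ?_⟩
      exact ⟨ρ', by simp⟩
  exact hinf ((Set.Finite.union (Set.finite_singleton σ)
    (Set.Finite.biUnion (Set.finite_Iio _) fun a _ => hc a)).subset hsub)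

open Classical in
noncomputable def next (T : Set (List ℕ)) (h : ℕ → ℕ) (hbd : BoundedTree h T)
    (σ : List ℕ) : List ℕ :=
  if hσ : (ext T σ).Infinite then σ ++ [Classical.choose (ext_step hbd hσ)] else []

noncomputable def seq (T : Set (List ℕ)) (h : ℕ → ℕ) (hbd : BoundedTree h T) : ℕ → List ℕ
  | 0 => []
  | n + 1 => next T h hbd (seq T h hbd n)

lemma seq_spec (hbd : BoundedTree h T) (hinf : T.Infinite) :
    ∀ n, (ext T (seq T h hbd n)).Infinite ∧ (seq T h hbd n).length = n := by
  intro n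
  induction n with
  | zero =>
    refine ⟨?_, rfl⟩
    have : ext T [] = T := by
      ext τ; simp [ext, List.nil_prefix]
    rw [seq, this]; exact hinf
  | succ m ih =>
    obtain ⟨hi, hl⟩ := ih
    have hn : seq T h hbd (m+1) = seq T h hbd m ++ [Classical.choose (ext_step hbd hi)] := by
      rw [seq, next, dif_pos hi]
    constructor
    · rw [hn]; exact Classical.choose_spec (ext_step hbd hi)
    · rw [hn]; simp [hl]

theorem koenig (hT : IsTree T) (hbd : BoundedTree h T) (hinf : T.Infinite) :
    ∃ g, g ∈ Paths T := by
  set s := seq T h hbd with hs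
  have hspec := seq_spec hbd hinf
  have hstep : ∀ n, ∃ a, s (n+1) = s n ++ [a] := by
    intro n
    exact ⟨_, by rw [hs]; rw [seq, next, dif_pos (hspec n).1]⟩
  use fun n => (s (n+1)).getD n 0
  have key : ∀ n, (List.range n).map (fun n => (s (n+1)).getD n 0) = s n := by
    intro n
    induction n with
    | zero => simp [hs, seq]
    | succ m ih =>
      obtain ⟨a, ha⟩ := hstep m
      rw [List.range_succ, List.map_append, ih, List.map_singleton, ha]
      congr 1
      have hl : (s m).length = m := (hspec m).2
      simp [List.getD_append_right, hl]
  intro n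
  rw [key n]
  exact ext_mem hT ((hspec n).1.nonempty)


def vOf (L : List ℕ) (i : ℕ) : ℕ := lfind (fun v => memB L (hclaim i v)) (maxL L + 1)
def kOf (L : List ℕ) : ℕ := lfind (fun i => decide (maxL L < vOf L i)) (L.length + 1)
def vlist (L : List ℕ) : List ℕ := (List.range (kOf L)).map (vOf L)

def witB (c : Nat.Partrec.Code) (x t : ℕ) (σ : List ℕ) : Bool :=
  (prefs σ).foldr (fun τ b =>
    ((List.range t).foldr (fun n b2 =>
      (decide (Nat.Partrec.Code.evaln t c (Nat.pair (Encodable.encode τ) n) = some x)) || b2)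
      false) || b) false

def Fb (c : Nat.Partrec.Code) (z t : ℕ) : Bool :=
  (strs (vlist (Denumerable.ofNat (List ℕ) z.unpair.2))).foldr
    (fun σ b => (memB (Denumerable.ofNat (List ℕ) z.unpair.2) (nclaim σ)
      || witB c z.unpair.1 t σ) && b) true

open Primrec

lemma hclaim_pr : Primrec₂ hclaim :=
  Primrec.nat_double.comp₂ (Primrec.succ.comp₂ (Primrec.nat_double.comp₂ Primrec₂.natPair))

lemma nclaim_pr : Primrec nclaim :=
  Primrec.nat_double_succ.comp (Primrec.nat_double.comp Primrec.encode)

lemma memB_pr : Primrec₂ memB :=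
  Primrec.list_foldr Primrec.fst (const false)
    (((dom_bool₂ (· || ·)).comp
      (Primrec.eq.decide.comp (fst.comp snd) (snd.comp fst))
      (snd.comp snd)).to₂)

lemma maxL_pr : Primrec maxL :=
  Primrec.list_foldr Primrec.id (const 0)
    ((nat_max.comp (fst.comp snd) (snd.comp snd)).to₂)

lemma lfind_pr {α : Type*} [Primcodable α] {p : α → ℕ → Bool} {f : α → ℕ}
    (hp : Primrec₂ p) (hf : Primrec f) : Primrec fun a => lfind (p a) (f a) := by
  have hstep : Primrec fun (q : α × (ℕ × ℕ)) =>
      if q.2.2 < q.2.1 then q.2.2 else if p q.1 q.2.1 then q.2.1 else q.2.1 + 1 := by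
    refine Primrec.ite (nat_lt.comp (snd.comp snd) (fst.comp snd)) (snd.comp snd) ?_
    refine Primrec.ite ?_ (fst.comp snd) (succ.comp (fst.comp snd))
    exact Primrec.eq.comp (hp.comp fst (fst.comp snd)) (const true)
  exact (Primrec.nat_rec' hf (const 0) hstep.to₂).of_eq fun a => rfl

lemma vOf_pr : Primrec₂ vOf := by
  exact lfind_pr (α := List ℕ × ℕ)
    (p := fun a v => memB a.1 (hclaim a.2 v))
    (f := fun a => maxL a.1 + 1)
    ((memB_pr.comp (fst.comp fst) (hclaim_pr.comp (snd.comp fst) snd)).to₂)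
    (succ.comp (maxL_pr.comp fst))

lemma kOf_pr : Primrec kOf :=
  lfind_pr (α := List ℕ)
    (p := fun a i => decide (maxL a < vOf a i))
    (f := fun a => a.length + 1)
    ((nat_lt.decide.comp (maxL_pr.comp fst) (vOf_pr.comp fst snd)).to₂)
    (succ.comp list_length)

lemma vlist_pr : Primrec vlist :=
  list_map (list_range.comp kOf_pr) vOf_pr

lemma strs_pr : Primrec strs := by
  have hg : Primrec₂ fun (q2 : (List ℕ × (ℕ × List (List ℕ))) × ℕ) (σ : List ℕ) =>
      q2.2 :: σ := (list_cons.comp (snd.comp fst) snd).to₂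
  have hh : Primrec fun (q : List ℕ × (ℕ × List (List ℕ))) =>
      (List.range q.2.1).flatMap fun a => q.2.2.map (a :: ·) := by
    refine list_flatMap (list_range.comp (fst.comp snd)) ?_
    exact (list_map (snd.comp (snd.comp fst)) hg).to₂
  exact (Primrec.list_foldr Primrec.id (const [[]]) hh.to₂).of_eq fun l => rfl

lemma prefs_pr : Primrec prefs := by
  have hh : Primrec fun (q : List ℕ × (ℕ × List (List ℕ))) =>
      ([] : List ℕ) :: q.2.2.map (q.2.1 :: ·) := by
    refine list_cons.comp (const []) ?_
    exact list_map (snd.comp snd) ((list_cons.comp (fst.comp (snd.comp fst)) snd).to₂)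
  exact (Primrec.list_foldr Primrec.id (const [[]]) hh.to₂).of_eq fun l => rfl

set_option maxHeartbeats 2000000 in
lemma witB_pr (c : Nat.Partrec.Code) :
    Primrec fun (q : (ℕ × ℕ) × List ℕ) => witB c q.1.1 q.1.2 q.2 := by
  have hinner : Primrec fun (a : ((ℕ × ℕ) × List ℕ) × (List ℕ × Bool)) =>
      (List.range a.1.1.2).foldr (fun n b2 =>
        (decide (Nat.Partrec.Code.evaln a.1.1.2 c (Nat.pair (Encodable.encode a.2.1) n)
          = some a.1.1.1)) || b2) false := by
    have hdec : Primrec fun (b : (((ℕ × ℕ) × List ℕ) × (List ℕ × Bool)) × (ℕ × Bool)) =>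
        (decide (Nat.Partrec.Code.evaln b.1.1.1.2 c
          (Nat.pair (Encodable.encode b.1.2.1) b.2.1) = some b.1.1.1.1)) || b.2.2 := by
      refine (dom_bool₂ (· || ·)).comp ?_ (snd.comp snd)
      refine Primrec.eq.decide.comp ?_ (option_some.comp (fst.comp (fst.comp (fst.comp fst))))
      exact Nat.Partrec.Code.primrec_evaln.comp
        (Primrec.pair (Primrec.pair (snd.comp (fst.comp (fst.comp fst))) (const c))
          (Primrec₂.natPair.comp (Primrec.encode.comp (fst.comp (snd.comp fst)))
            (fst.comp snd)))
    exact (Primrec.list_foldr (list_range.comp (snd.comp (fst.comp fst))) (const false)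
      hdec.to₂).of_eq fun a => rfl
  have hh : Primrec fun (a : ((ℕ × ℕ) × List ℕ) × (List ℕ × Bool)) =>
      ((List.range a.1.1.2).foldr (fun n b2 =>
        (decide (Nat.Partrec.Code.evaln a.1.1.2 c (Nat.pair (Encodable.encode a.2.1) n)
          = some a.1.1.1)) || b2) false) || a.2.2 :=
    (dom_bool₂ (· || ·)).comp hinner (snd.comp snd)
  exact (Primrec.list_foldr (prefs_pr.comp snd) (const false) hh.to₂).of_eq fun a => rfl

set_option maxHeartbeats 2000000 in
lemma Fb_pr (c : Nat.Partrec.Code) : Primrec₂ (Fb c) := by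
  have hL : Primrec fun (a : ℕ × ℕ) => Denumerable.ofNat (List ℕ) a.1.unpair.2 :=
    (Primrec.ofNat (List ℕ)).comp (snd.comp (Primrec.unpair.comp fst))
  have hh : Primrec fun (q : (ℕ × ℕ) × (List ℕ × Bool)) =>
      (memB (Denumerable.ofNat (List ℕ) q.1.1.unpair.2) (nclaim q.2.1)
        || witB c q.1.1.unpair.1 q.1.2 q.2.1) && q.2.2 := by
    refine (dom_bool₂ (· && ·)).comp ?_ (snd.comp snd)
    refine (dom_bool₂ (· || ·)).comp ?_ ?_
    · exact memB_pr.comp (hL.comp fst) (nclaim_pr.comp (fst.comp snd))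
    · exact (witB_pr c).comp
        (Primrec.pair (Primrec.pair (fst.comp (Primrec.unpair.comp (fst.comp fst)))
          (snd.comp fst)) (fst.comp snd))
  exact (Primrec.list_foldr (strs_pr.comp (vlist_pr.comp hL)) (const true) hh.to₂).of_eq
    fun a => rfl

lemma Fb_iff (c : Nat.Partrec.Code) (z t : ℕ) :
    Fb c z t = true ↔ ∀ σ ∈ strs (vlist (Denumerable.ofNat (List ℕ) z.unpair.2)),
      memB (Denumerable.ofNat (List ℕ) z.unpair.2) (nclaim σ) = true
        ∨ witB c z.unpair.1 t σ = true := by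
  rw [Fb, foldr_and_iff]
  simp only [Bool.or_eq_true]

lemma witB_iff (c : Nat.Partrec.Code) (x t : ℕ) (σ : List ℕ) :
    witB c x t σ = true ↔ ∃ τ, τ <+: σ ∧ ∃ n < t,
      Nat.Partrec.Code.evaln t c (Nat.pair (Encodable.encode τ) n) = some x := by
  rw [witB, foldr_or_iff]
  constructor
  · rintro ⟨τ, hτ, hfold⟩
    rw [foldr_or_iff] at hfold
    obtain ⟨n, hn, hdec⟩ := hfold
    exact ⟨τ, mem_prefs.1 hτ, n, List.mem_range.1 hn, of_decide_eq_true hdec⟩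
  · rintro ⟨τ, hτ, n, hn, hev⟩
    refine ⟨τ, mem_prefs.2 hτ, ?_⟩
    rw [foldr_or_iff]
    exact ⟨n, List.mem_range.2 hn, decide_eq_true hev⟩

lemma witB_mono {c : Nat.Partrec.Code} {x s t : ℕ} {σ : List ℕ} (hst : s ≤ t)
    (hw : witB c x s σ = true) : witB c x t σ = true := by
  rw [witB_iff] at hw ⊢
  obtain ⟨τ, hτ, n, hn, hev⟩ := hw
  exact ⟨τ, hτ, n, lt_of_lt_of_le hn hst,
    Option.mem_def.1 (Nat.Partrec.Code.evaln_mono hst (Option.mem_def.2 hev))⟩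

lemma hclaim_inj {i v i' v' : ℕ} (he : hclaim i v = hclaim i' v') : i = i' ∧ v = v' := by
  have : Nat.pair i v = Nat.pair i' v' := by unfold hclaim at he; omega
  rwa [Nat.pair_eq_pair] at this

lemma hclaim_ne_nclaim (i v : ℕ) (σ : List ℕ) : hclaim i v ≠ nclaim σ := by
  unfold hclaim nclaim; omega

lemma le_hclaim (i v : ℕ) : v ≤ hclaim i v := by
  have := Nat.right_le_pair i v
  unfold hclaim; omega

def psi (c : Nat.Partrec.Code) : ℕ →. ℕ := fun z => Nat.rfind fun t => Part.some (Fb c z t)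

lemma psi_partrec (c : Nat.Partrec.Code) : Partrec (psi c) :=
  Partrec.rfind ((Fb_pr c).to_comp.partrec₂)

lemma psi_dom (c : Nat.Partrec.Code) (z : ℕ) :
    (psi c z).Dom ↔ ∃ t, Fb c z t = true := by
  refine (Nat.rfind_dom (p := fun t => Part.some (Fb c z t))).trans ?_
  constructor
  · rintro ⟨n, hn, -⟩
    exact ⟨n, (Part.mem_some_iff.1 hn).symm⟩
  · rintro ⟨t, ht⟩
    exact ⟨t, Part.mem_some_iff.2 ht.symm, fun _ => trivial⟩

lemma list_uniform {β : Type*} {l : List β} {P : β → Prop} {W : β → ℕ → Prop}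
    (mono : ∀ b s t, s ≤ t → W b s → W b t)
    (H : ∀ b ∈ l, P b ∨ ∃ t, W b t) : ∃ t, ∀ b ∈ l, P b ∨ W b t := by
  induction l with
  | nil => exact ⟨0, by simp⟩
  | cons a l ih =>
    obtain ⟨t1, ht1⟩ := ih fun b hb => H b (List.mem_cons_of_mem a hb)
    rcases H a List.mem_cons_self with hP | ⟨t2, ht2⟩
    · exact ⟨t1, fun b hb => by
        rcases List.mem_cons.1 hb with rfl | hb
        · exact Or.inl hP
        · exact ht1 b hb⟩
    · refine ⟨max t1 t2, fun b hb => ?_⟩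
      rcases List.mem_cons.1 hb with rfl | hb
      · exact Or.inr (mono _ _ _ (le_max_right _ _) ht2)
      · rcases ht1 b hb with hP | hW
        · exact Or.inl hP
        · exact Or.inr (mono _ _ _ (le_max_left _ _) hW)

lemma bridge (Φ : TuringFunctional) : ∃ c : Nat.Partrec.Code,
    ∀ (τ : List ℕ) (n x : ℕ),
      x ∈ c.eval (Nat.pair (Encodable.encode τ) n) ↔ x ∈ Φ.app (τ, n) := by
  have hp : Nat.Partrec fun m => Part.bind (Encodable.decode (α := List ℕ × ℕ) m)
      fun a => (Φ.app a).map Encodable.encode := Φ.partrec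
  obtain ⟨c, hc⟩ := Nat.Partrec.Code.exists_code.1 hp
  refine ⟨c, fun τ n x => ?_⟩
  rw [hc]
  have hd : (Encodable.decode (Nat.pair (Encodable.encode τ) n) : Option (List ℕ × ℕ))
      = some (τ, n) := by
    have he : Nat.pair (Encodable.encode τ) n = Encodable.encode (τ, n) := by
      rw [Encodable.encode_prod_val]; rfl
    rw [he, Encodable.encodek]
  simp only [hd, Part.coe_some, Part.bind_some]
  simp [Encodable.encode]

lemma sound {T : Set (List ℕ)} {h : ℕ → ℕ} {A : Set ℕ}
    (hT : IsTree T) (hbd : BoundedTree h T) {g₀ : ℕ → ℕ} (hg₀ : g₀ ∈ Paths T)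
    {Φ : TuringFunctional} (hΦ : ∀ g ∈ Paths T, ∃ f, Φ.Total g f ∧ f ∈ EProb A)
    {c₀ : Nat.Partrec.Code}
    (hbr : ∀ (τ : List ℕ) (n x : ℕ),
      x ∈ c₀.eval (Nat.pair (Encodable.encode τ) n) ↔ x ∈ Φ.app (τ, n))
    {x u t : ℕ}
    (hJ : ∀ y ∈ Denumerable.ofNat (List ℕ) u,
      y ∈ joinSet (joinSet (codeTree T) (graphSet h)) (joinSet (codeTree T) (graphSet h))ᶜ)
    (hF : Fb c₀ (Nat.pair x u) t = true) : x ∈ A := by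
  set L := Denumerable.ofNat (List ℕ) u with hL
  rw [Fb_iff] at hF
  simp only [Nat.unpair_pair] at hF
  rw [← hL] at hF
  set k := kOf L with hk
  -- values are correct below k
  have hval : ∀ i < k, h i = vOf L i := by
    intro i hi
    have h1 := lfind_min (fun j => decide (maxL L < vOf L j)) (L.length + 1) i hi
    have h2 : vOf L i < maxL L + 1 := by
      have := of_decide_eq_false h1
      omega
    have h3 := lfind_spec (p := fun v => memB L (hclaim i v)) (n := maxL L + 1) h2
    exact hclaim_mem.1 (hJ _ (memB_iff.1 h3))
  -- the level-k node of g₀ is in strs (vlist L)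
  have hglen : ∀ i < k, g₀ i < h i := by
    intro i hi
    have hm := hg₀ (i + 1)
    have hlen : i < ((List.range (i+1)).map g₀).length := by simp
    have := hbd _ hm i hlen
    simpa using this
  have hgk : (List.range k).map g₀ ∈ strs (vlist L) := by
    rw [mem_strs]
    have hlen : (vlist L).length = k := by simp [vlist, hk]
    constructor
    · simp [hlen]
    · intro i hi
      rw [hlen] at hi
      have e1 : ((List.range k).map g₀).getD i 0 = g₀ i := by
        rw [List.getD_eq_getElem?_getD]
        simp [List.getElem?_map, List.getElem?_range hi]
      have e2 : (vlist L).getD i 0 = vOf L i := by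
        rw [List.getD_eq_getElem?_getD]
        simp [vlist, List.getElem?_map, List.getElem?_range hi, ← hk]
      rw [e1, e2, ← hval i hi]
      exact hglen i hi
  rcases hF _ hgk with hnc | hwit
  · exact absurd (hg₀ k) ((nclaim_mem hT).1 (hJ _ (memB_iff.1 hnc)))
  · rw [witB_iff] at hwit
    obtain ⟨τ, hτpre, n, hnt, hev⟩ := hwit
    have hxΦ : x ∈ Φ.app (τ, n) :=
      (hbr τ n x).1 (Nat.Partrec.Code.evaln_sound (Option.mem_def.2 hev))
    have hτlen : τ.length ≤ k := by
      have := hτpre.length_le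
      simpa using this
    have hτeq : τ = (List.range τ.length).map g₀ := by
      conv_lhs => rw [List.prefix_iff_eq_take.1 hτpre]
      rw [← List.map_take, List.take_range, Nat.min_eq_left hτlen]
    obtain ⟨f, hTot, hfA⟩ := hΦ g₀ hg₀
    obtain ⟨k', hk'⟩ := hTot n
    have hfx : x = f n := by
      rcases le_total τ.length k' with hle' | hle'
      · have hpre2 : τ <+: (List.range k').map g₀ := by
          have hr : List.range τ.length = (List.range k').take τ.length := by
            rw [List.take_range, Nat.min_eq_left hle']
          rw [hτeq, hr, List.map_take]
          exact List.take_prefix _ _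
        exact Part.mem_unique (Φ.mono hpre2 hxΦ) hk'
      · have hpre2 : (List.range k').map g₀ <+: τ := by
          have hr : List.range k' = (List.range τ.length).take k' := by
            rw [List.take_range, Nat.min_eq_left hle']
          rw [hτeq, hr, List.map_take]
          exact List.take_prefix _ _
        exact Part.mem_unique hxΦ (Φ.mono hpre2 hk')
    have hra : Set.range f = A := hfA
    rw [← hra]
    exact ⟨n, hfx.symm⟩

lemma complete {T : Set (List ℕ)} {h : ℕ → ℕ} {A : Set ℕ}
    (hT : IsTree T) (hbd : BoundedTree h T)
    {Φ : TuringFunctional} (hΦ : ∀ g ∈ Paths T, ∃ f, Φ.Total g f ∧ f ∈ EProb A)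
    {c₀ : Nat.Partrec.Code}
    (hbr : ∀ (τ : List ℕ) (n x : ℕ),
      x ∈ c₀.eval (Nat.pair (Encodable.encode τ) n) ↔ x ∈ Φ.app (τ, n))
    {x : ℕ} (hx : x ∈ A) :
    ∃ u, (∃ t, Fb c₀ (Nat.pair x u) t = true) ∧
      ∀ y ∈ Denumerable.ofNat (List ℕ) u,
        y ∈ joinSet (joinSet (codeTree T) (graphSet h)) (joinSet (codeTree T) (graphSet h))ᶜ := by
  classical
  set T' : Set (List ℕ) := {σ | σ ∈ T ∧ ∀ τ, τ <+: σ → ∀ n, x ∉ Φ.app (τ, n)} with hT'def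
  have hT'tree : IsTree T' := by
    rintro σ τ hpre ⟨hτT, hτw⟩
    exact ⟨hT hpre hτT, fun ρ hρ n => hτw ρ (hρ.trans hpre) n⟩
  have hbd' : BoundedTree h T' := fun σ hσ => hbd σ hσ.1
  have hfin : T'.Finite := by
    by_contra hinf'
    obtain ⟨g', hg'⟩ := koenig hT'tree hbd' hinf'
    have hg'T : g' ∈ Paths T := fun n => (hg' n).1
    obtain ⟨f, hTot, hfA⟩ := hΦ g' hg'T
    have hrf : Set.range f = A := hfA
    obtain ⟨m, hm⟩ : x ∈ Set.range f := hrf ▸ hx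
    obtain ⟨k', hk'⟩ := hTot m
    exact (hg' k').2 _ (List.prefix_refl _) m (hm ▸ hk')
  obtain ⟨k0, hk0⟩ : ∃ k0, ∀ σ ∈ T', σ.length < k0 := by
    obtain ⟨b, hb⟩ := (hfin.image List.length).bddAbove
    exact ⟨b + 1, fun σ hσ => lt_of_le_of_lt (hb ⟨σ, hσ, rfl⟩) (lt_add_one b)⟩
  set L : List ℕ := ((List.range k0).map fun i => hclaim i (h i)) ++
    (((strs ((List.range k0).map h)).filter fun σ => decide (σ ∉ T)).map nclaim) with hLdef
  have hLJ : ∀ y ∈ L,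
      y ∈ joinSet (joinSet (codeTree T) (graphSet h)) (joinSet (codeTree T) (graphSet h))ᶜ := by
    intro y hy
    rcases List.mem_append.1 hy with hy | hy
    · obtain ⟨i, -, rfl⟩ := List.mem_map.1 hy
      exact hclaim_mem.2 rfl
    · obtain ⟨σ, hσ, rfl⟩ := List.mem_map.1 hy
      exact (nclaim_mem hT).2 (of_decide_eq_true (List.mem_filter.1 hσ).2)
  have hclaims : ∀ i v, hclaim i v ∈ L → i < k0 ∧ v = h i := by
    intro i v hv
    rcases List.mem_append.1 hv with hv | hv
    · obtain ⟨i', hi', he⟩ := List.mem_map.1 hv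
      obtain ⟨rfl, rfl⟩ := hclaim_inj he.symm
      exact ⟨List.mem_range.1 hi', rfl⟩
    · obtain ⟨σ, -, he⟩ := List.mem_map.1 hv
      exact absurd he.symm (hclaim_ne_nclaim i v σ)
  have hhmax : ∀ i < k0, h i ≤ maxL L := by
    intro i hi
    exact le_trans (le_hclaim i (h i))
      (le_maxL (List.mem_append_left _ (List.mem_map.2 ⟨i, List.mem_range.2 hi, rfl⟩)))
  have hvOf : ∀ i < k0, vOf L i = h i := by
    intro i hi
    apply lfind_eq
    · have := hhmax i hi; omega
    · intro v hv
      rw [← Bool.not_eq_true]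
      intro hmem
      have := (hclaims i v (memB_iff.1 hmem)).2
      omega
    · exact memB_iff.2 (List.mem_append_left _ (List.mem_map.2 ⟨i, List.mem_range.2 hi, rfl⟩))
  have hkL : k0 ≤ L.length := by
    rw [hLdef]
    simp
  have hkOf : kOf L = k0 := by
    apply lfind_eq
    · omega
    · intro i hi
      have := hvOf i hi
      have h2 := hhmax i hi
      simp [this]
      omega
    · have hall : vOf L k0 = maxL L + 1 := by
        apply lfind_all
        intro v hv
        rw [← Bool.not_eq_true]
        intro hmem
        exact absurd (hclaims k0 v (memB_iff.1 hmem)).1 (lt_irrefl k0)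
      simp [hall]
  have hvlist : vlist L = (List.range k0).map h := by
    rw [vlist, hkOf]
    exact List.map_congr_left fun i hi => hvOf i (List.mem_range.1 hi)
  -- per-σ condition with existential time
  have hper : ∀ σ ∈ strs ((List.range k0).map h),
      memB L (nclaim σ) = true ∨ ∃ t, witB c₀ x t σ = true := by
    intro σ hσ
    by_cases hσT : σ ∈ T
    · right
      have hσlen : σ.length = k0 := by
        have := (mem_strs.1 hσ).1
        simpa using this
      have hσnT' : σ ∉ T' := fun hσ' => absurd (hk0 σ hσ') (by omega)
      have : ¬ ∀ τ, τ <+: σ → ∀ n, x ∉ Φ.app (τ, n) := fun hc => hσnT' ⟨hσT, hc⟩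
      push_neg at this
      obtain ⟨τ, hτpre, n, hn⟩ := this
      have hev : x ∈ c₀.eval (Nat.pair (Encodable.encode τ) n) := (hbr τ n x).2 hn
      obtain ⟨t, ht⟩ := Nat.Partrec.Code.evaln_complete.1 hev
      have hnlt : n < t := lt_of_le_of_lt (Nat.right_le_pair _ _)
        (Nat.Partrec.Code.evaln_bound ht)
      exact ⟨t, (witB_iff c₀ x t σ).2 ⟨τ, hτpre, n, hnlt, Option.mem_def.1 ht⟩⟩
    · left
      refine memB_iff.2 (List.mem_append_right _ (List.mem_map.2 ⟨σ, ?_, rfl⟩))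
      exact List.mem_filter.2 ⟨hσ, decide_eq_true hσT⟩
  obtain ⟨t, ht⟩ := list_uniform (W := fun σ t => witB c₀ x t σ = true)
    (fun σ s t hst hw => witB_mono hst hw) hper
  refine ⟨Encodable.encode L, ⟨t, ?_⟩, by rw [Denumerable.ofNat_encode]; exact hLJ⟩
  rw [Fb_iff]
  simp only [Nat.unpair_pair, Denumerable.ofNat_encode]
  rw [hvlist]
  exact ht

end S4

/-- If `T` is an infinite `h`-bounded tree and `E_A ≤ₛ [T]` for a nonempty `A`,
then `A` is r.e. in `T ⊕ h`. -/
theorem stmt4 (T : Set (List ℕ)) (h : ℕ → ℕ) (A : Set ℕ)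
    (hT : IsTree T) (hinf : T.Infinite) (hbd : BoundedTree h T)
    (hA : A.Nonempty) (hle : MedvedevLE (EProb A) (Paths T)) :
    REin A (joinSet (codeTree T) (graphSet h)) := by
  obtain ⟨Φ, hΦ⟩ := hle
  obtain ⟨c₀, hbr⟩ := S4.bridge Φ
  obtain ⟨g₀, hg₀⟩ := S4.koenig hT hbd hinf
  obtain ⟨cψ, hcψ⟩ := Nat.Partrec.Code.exists_code.1 (Partrec.nat_iff.1 (S4.psi_partrec c₀))
  refine ⟨Encodable.encode cψ, ?_⟩
  ext x
  simp only [enumOpApply, Set.mem_setOf_eq, Denumerable.ofNat_encode, hcψ]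
  constructor
  · rintro ⟨u, hdom, hJ⟩
    rw [S4.psi_dom] at hdom
    obtain ⟨t, ht⟩ := hdom
    exact S4.sound hT hbd hg₀ hΦ hbr hJ ht
  · intro hx
    obtain ⟨u, ⟨t, ht⟩, hJ⟩ := S4.complete hT hbd hΦ hbr hx
    exact ⟨u, (S4.psi_dom c₀ (Nat.pair x u)).2 ⟨t, ht⟩, hJ⟩
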